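/- Let H, K be Hilbert spaces, P : H → K unitary, and let a, s : H → H be bounded operators with s injective. Suppose there exist subspaces M₁, M₂ of finite codimension in H such that Pa − aP vanishes on M₁ and Ps − sP vanishes on M₂ (viewing P as acting wherever composition makes sense, i.e., H = K up to the identification by P). If u is the closed operator s⁻¹a with domain {x : ax ∈ sH}, then there is a subspace M of finite codimension in H such that Pu and uP agree on M (equal domains intersected with M and equal values there). -/
import Mathlib

open Submodule LinearMap

private lemma finCodim_of_ker {K : Type*} [Field K] {H V : Type*} [AddCommGroup H] [Module K H]
    [AddCommGroup V] [Module K V] [FiniteDimensional K V] (f : H →ₗ[K] V) :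
    FiniteDimensional K (H ⧸ LinearMap.ker f) :=
  FiniteDimensional.of_injective ((LinearMap.ker f).liftQ f le_rfl)
    (LinearMap.ker_eq_bot.mp (Submodule.ker_liftQ_eq_bot _ _ _ le_rfl))

private lemma finCodim_comap {K : Type*} [Field K] {H H' : Type*} [AddCommGroup H] [Module K H]
    [AddCommGroup H'] [Module K H'] (f : H →ₗ[K] H') (N : Submodule K H')
    (h : FiniteDimensional K (H' ⧸ N)) :
    FiniteDimensional K (H ⧸ N.comap f) := by
  have hk : LinearMap.ker (N.mkQ ∘ₗ f) = N.comap f := by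
    ext x; simp [Submodule.Quotient.mk_eq_zero]
  have := finCodim_of_ker (N.mkQ ∘ₗ f)
  rwa [hk] at this

private lemma finCodim_inf {K : Type*} [Field K] {H : Type*} [AddCommGroup H] [Module K H]
    (A B : Submodule K H) (hA : FiniteDimensional K (H ⧸ A)) (hB : FiniteDimensional K (H ⧸ B)) :
    FiniteDimensional K (H ⧸ (A ⊓ B)) := by
  have hk : LinearMap.ker (A.mkQ.prod B.mkQ) = A ⊓ B := by
    rw [LinearMap.ker_prod, Submodule.ker_mkQ, Submodule.ker_mkQ]
  have := finCodim_of_ker (A.mkQ.prod B.mkQ)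
  rwa [hk] at this

/-- Key lemma: if `M` has finite codimension, there is a finite-codimension `N` with
`N ⊓ range s ≤ s M`. -/
private lemma key {K : Type*} [Field K] {H : Type*} [AddCommGroup H] [Module K H]
    (s : H →ₗ[K] H) (M : Submodule K H) (hM : FiniteDimensional K (H ⧸ M)) :
    ∃ N : Submodule K H, FiniteDimensional K (H ⧸ N) ∧ N ⊓ LinearMap.range s ≤ M.map s := by
  set S := M.map s with hS
  set g : H →ₗ[K] H ⧸ S := S.mkQ ∘ₗ s with hg
  have hMg : M ≤ LinearMap.ker g := by
    intro x hx
    simp only [LinearMap.mem_ker, hg, LinearMap.comp_apply, Submodule.mkQ_apply,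
      Submodule.Quotient.mk_eq_zero]
    exact Submodule.mem_map_of_mem hx
  set V := LinearMap.range (M.liftQ g hMg) with hV
  have hVfin : FiniteDimensional K V := inferInstance
  have hrange : LinearMap.range g ≤ V := by
    rintro _ ⟨x, rfl⟩
    exact ⟨Submodule.Quotient.mk x, rfl⟩
  obtain ⟨W, hW⟩ := Submodule.exists_isCompl V
  refine ⟨W.comap S.mkQ, ?_, ?_⟩
  · have e := Submodule.quotientEquivOfIsCompl W V hW.symm
    have : FiniteDimensional K ((H ⧸ S) ⧸ W) :=
      FiniteDimensional.of_injective e.toLinearMap e.injective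
    exact finCodim_comap S.mkQ W this
  · rintro x ⟨hxW, hxR⟩
    have h1 : g ∈ Set.univ := trivial
    have hgx : S.mkQ x ∈ V := by
      obtain ⟨y, rfl⟩ := hxR
      exact hrange ⟨y, rfl⟩
    have hgxW : S.mkQ x ∈ W := hxW
    have : S.mkQ x = 0 := by
      have := hW.disjoint.le_bot ⟨hgx, hgxW⟩
      simpa using this
    rwa [Submodule.mkQ_apply, Submodule.Quotient.mk_eq_zero] at this

theorem exists_finiteCodim_Pu_eq_uP
    {H : Type*} [NormedAddCommGroup H] [InnerProductSpace ℂ H] [CompleteSpace H]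
    (P : H →L[ℂ] H) (hP : P ∈ unitary (H →L[ℂ] H))
    (a s : H →L[ℂ] H) (hs : Function.Injective s)
    (M₁ M₂ : Submodule ℂ H)
    (hM₁ : FiniteDimensional ℂ (H ⧸ M₁)) (hM₂ : FiniteDimensional ℂ (H ⧸ M₂))
    (h₁ : ∀ x ∈ M₁, P (a x) = a (P x)) (h₂ : ∀ x ∈ M₂, P (s x) = s (P x)) :
    ∃ M : Submodule ℂ H, FiniteDimensional ℂ (H ⧸ M) ∧
      (∀ x ∈ M, ((∃ y : H, s y = a x) ↔ ∃ z : H, s z = a (P x))) ∧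
      ∀ x ∈ M, ∀ y z : H, s y = a x → s z = a (P x) → P y = z := by
  -- P is bijective
  have hP1 : (star P) * P = 1 := hP.1
  have hP2 : P * (star P) = 1 := hP.2
  have hPinj : Function.Injective P := by
    intro x y h
    have : (star P) (P x) = (star P) (P y) := congrArg _ h
    simpa [← ContinuousLinearMap.comp_apply, ← ContinuousLinearMap.mul_def, hP1] using this
  -- P M₂ has finite codimension
  have hPM₂ : FiniteDimensional ℂ (H ⧸ (M₂.map (P : H →ₗ[ℂ] H))) := by
    have heq : M₂.map (P : H →ₗ[ℂ] H) = M₂.comap ((star P : H →L[ℂ] H) : H →ₗ[ℂ] H) := by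
      ext x
      constructor
      · rintro ⟨y, hy, rfl⟩
        have : (star P) (P y) = y := by
          have := congrArg (fun f : H →L[ℂ] H => f y) hP1
          simpa using this
        simpa [Submodule.mem_comap, this] using hy
      · intro hx
        refine ⟨(star P) x, hx, ?_⟩
        have := congrArg (fun f : H →L[ℂ] H => f x) hP2
        simpa using this
    rw [heq]
    exact finCodim_comap _ _ hM₂
  obtain ⟨N₁, hN₁fin, hN₁⟩ := key (s : H →ₗ[ℂ] H) M₂ hM₂
  obtain ⟨N₂, hN₂fin, hN₂⟩ := key (s : H →ₗ[ℂ] H) (M₂.map (P : H →ₗ[ℂ] H)) hPM₂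
  set M₃ := N₁.comap (a : H →ₗ[ℂ] H) with hM₃def
  set M₄ := (N₂.comap (P : H →ₗ[ℂ] H)).comap (a : H →ₗ[ℂ] H) with hM₄def
  have hM₃fin : FiniteDimensional ℂ (H ⧸ M₃) := finCodim_comap _ _ hN₁fin
  have hM₄fin : FiniteDimensional ℂ (H ⧸ M₄) :=
    finCodim_comap _ _ (finCodim_comap _ _ hN₂fin)
  refine ⟨M₁ ⊓ M₃ ⊓ M₄, finCodim_inf _ _ (finCodim_inf _ _ hM₁ hM₃fin) hM₄fin, ?_, ?_⟩
  · rintro x ⟨⟨hx1, hx3⟩, hx4⟩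
    constructor
    · rintro ⟨y, hy⟩
      -- a x ∈ N₁ ⊓ range s ≤ s M₂
      have hax : a x ∈ N₁ ⊓ LinearMap.range (s : H →ₗ[ℂ] H) := ⟨hx3, ⟨y, hy⟩⟩
      obtain ⟨y', hy'M, hy'⟩ := hN₁ hax
      simp only [ContinuousLinearMap.coe_coe] at hy'
      refine ⟨P y', ?_⟩
      rw [← h₂ y' hy'M, hy', h₁ x hx1]
    · rintro ⟨z, hz⟩
      have hPax : P (a x) ∈ N₂ ⊓ LinearMap.range (s : H →ₗ[ℂ] H) := by
        refine ⟨hx4, ⟨z, ?_⟩⟩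
        simp only [ContinuousLinearMap.coe_coe]
        rw [hz, h₁ x hx1]
      obtain ⟨w, hwM, hw⟩ := hN₂ hPax
      obtain ⟨v, hvM, rfl⟩ := hwM
      simp only [ContinuousLinearMap.coe_coe] at hw
      have : P (s v) = P (a x) := by rw [h₂ v hvM]; exact hw
      exact ⟨v, hPinj this⟩
  · rintro x ⟨⟨hx1, hx3⟩, hx4⟩ y z hy hz
    have hax : a x ∈ N₁ ⊓ LinearMap.range (s : H →ₗ[ℂ] H) := ⟨hx3, ⟨y, hy⟩⟩
    obtain ⟨y', hy'M, hy'⟩ := hN₁ hax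
    simp only [ContinuousLinearMap.coe_coe] at hy'
    have hyy' : y = y' := hs (by rw [hy, ← hy'])
    subst hyy'
    apply hs
    rw [← h₂ y hy'M, hy, h₁ x hx1, hz]
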